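/- Let P : ℝⁿ → ℝⁿ be continuously differentiable, let x* be a fixed point of P (P(x*) = x*), and suppose |det DP(x*)| > 1. Then x* is not a Lyapunov stable fixed point of the discrete dynamical system x_{k+1} = P(x_k): it is not the case that for every ε > 0 there exists δ > 0 such that ‖y − x*‖ < δ implies ‖P^k(y) − x*‖ < ε for all k ≥ 0. -/

import Mathlib

open Function
open MeasureTheory

open Metric MeasureTheory Set Filter Topology in
private lemma exists_clequiv_fderiv {n : ℕ} (P : (Fin n → ℝ) → (Fin n → ℝ)) (x : Fin n → ℝ)
    (h : (fderiv ℝ P x).det ≠ 0) :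
    ∃ e : (Fin n → ℝ) ≃L[ℝ] (Fin n → ℝ),
      (e : (Fin n → ℝ) →L[ℝ] (Fin n → ℝ)) = fderiv ℝ P x := by
  have h' : LinearMap.det ((fderiv ℝ P x) : (Fin n → ℝ) →ₗ[ℝ] (Fin n → ℝ)) ≠ 0 := h
  refine ⟨(LinearMap.equivOfDetNeZero _ h').toContinuousLinearEquiv, ?_⟩
  ext y
  simp [LinearMap.equivOfDetNeZero]

/-- If a `C¹` map `P : ℝⁿ → ℝⁿ` has a fixed point `x*` with `|det DP(x*)| > 1`, then
`x*` is not a Lyapunov stable fixed point of the discrete system `x_{k+1} = P(x_k)`. -/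
theorem det_gt_one_not_lyapunov_stable
    (n : ℕ) (P : (Fin n → ℝ) → (Fin n → ℝ)) (hP : ContDiff ℝ 1 P)
    (xs : Fin n → ℝ) (hfix : P xs = xs)
    (hdet : 1 < |(fderiv ℝ P xs).det|) :
    ¬ (∀ ε > 0, ∃ δ > 0, ∀ y : Fin n → ℝ,
        ‖y - xs‖ < δ → ∀ k : ℕ, ‖P^[k] y - xs‖ < ε) := by
  intro H
  have hdiff : Differentiable ℝ P := hP.differentiable one_ne_zero
  have hcont : Continuous fun x => (fderiv ℝ P x).det :=
    ContinuousLinearMap.continuous_det.comp (hP.continuous_fderiv one_ne_zero)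
  set c : ℝ := (1 + |(fderiv ℝ P xs).det|) / 2 with hcdef
  have hc1 : 1 < c := by simp only [hcdef]; linarith
  have hcx : c < |(fderiv ℝ P xs).det| := by simp only [hcdef]; linarith
  have hopen : IsOpen {x | c < |(fderiv ℝ P x).det|} :=
    isOpen_lt continuous_const (continuous_abs.comp hcont)
  obtain ⟨e, he⟩ := exists_clequiv_fderiv P xs (by intro h0; rw [h0] at hdet; norm_num at hdet)
  have hstrict : HasStrictFDerivAt P (e : (Fin n → ℝ) →L[ℝ] (Fin n → ℝ)) xs := by
    rw [he]; exact hP.contDiffAt.hasStrictFDerivAt one_ne_zero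
  set src := (hstrict.toOpenPartialHomeomorph P).source with hsrc
  have hsrc_open : IsOpen src := (hstrict.toOpenPartialHomeomorph P).open_source
  have hinj : Set.InjOn P src := by
    have := (hstrict.toOpenPartialHomeomorph P).injOn
    rwa [hstrict.toOpenPartialHomeomorph_coe] at this
  have hmem : xs ∈ src := hstrict.mem_toOpenPartialHomeomorph_source
  obtain ⟨r, hr, hball⟩ := Metric.nhds_basis_closedBall.mem_iff.1
    ((hsrc_open.inter hopen).mem_nhds ⟨hmem, hcx⟩)
  obtain ⟨δ, hδ, hδprop⟩ := H r hr
  set δ' : ℝ := min δ r with hδ'def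
  have hδ'pos : 0 < δ' := lt_min hδ hr
  set S : ℕ → Set (Fin n → ℝ) := fun k => P^[k] '' Metric.ball xs δ' with hSdef
  have hS0 : S 0 = Metric.ball xs δ' := by simp [hSdef]
  have hSsucc : ∀ k, S (k + 1) = P '' S k := by
    intro k
    simp only [hSdef, Function.iterate_succ', Set.image_comp]
  have hSsub : ∀ k, S k ⊆ Metric.ball xs r := by
    rintro k z ⟨y, hy, rfl⟩
    rw [Metric.mem_ball, dist_eq_norm]
    exact hδprop y (by rw [← dist_eq_norm]; exact lt_of_lt_of_le hy (min_le_left _ _)) k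
  have hdetpos : ∀ x ∈ Metric.ball xs r, c < |(fderiv ℝ P x).det| := fun x hx =>
    (hball (Metric.ball_subset_closedBall hx)).2
  have hSsrc : ∀ k, S k ⊆ src := fun k =>
    (hSsub k).trans (Metric.ball_subset_closedBall.trans (hball.trans (Set.inter_subset_left)))
  have hSopen : ∀ k, IsOpen (S k) := by
    intro k
    induction k with
    | zero => rw [hS0]; exact Metric.isOpen_ball
    | succ k ih =>
      rw [hSsucc]
      rw [isOpen_iff_mem_nhds]
      rintro z ⟨x, hx, rfl⟩
      have hxd : (fderiv ℝ P x).det ≠ 0 := by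
        have h1 := hdetpos x (hSsub k hx)
        intro h0; rw [h0] at h1; norm_num at h1; linarith
      obtain ⟨ex, hex⟩ := exists_clequiv_fderiv P x hxd
      have hsx : HasStrictFDerivAt P (ex : (Fin n → ℝ) →L[ℝ] (Fin n → ℝ)) x := by
        rw [hex]; exact hP.contDiffAt.hasStrictFDerivAt one_ne_zero
      rw [← hsx.map_nhds_eq_of_equiv, Filter.mem_map]
      exact Filter.mem_of_superset (ih.mem_nhds hx) (Set.subset_preimage_image _ _)
  -- measure growth
  have hkey : ∀ k, ENNReal.ofReal c * volume (S k) ≤ volume (S (k + 1)) := by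
    intro k
    rw [hSsucc]
    have heq := lintegral_abs_det_fderiv_eq_addHaar_image volume (hSopen k).measurableSet
      (f' := fun x => fderiv ℝ P x)
      (fun x _ => (hdiff x).hasFDerivAt.hasFDerivWithinAt) (hinj.mono (hSsrc k))
    rw [← heq]
    calc ENNReal.ofReal c * volume (S k)
        = ∫⁻ _ in S k, ENNReal.ofReal c ∂volume := by rw [setLIntegral_const]
      _ ≤ ∫⁻ x in S k, ENNReal.ofReal |(fderiv ℝ P x).det| ∂volume := by
          refine setLIntegral_mono' (hSopen k).measurableSet fun x hx => ?_
          exact ENNReal.ofReal_le_ofReal (le_of_lt (hdetpos x (hSsub k hx)))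
  have hiter : ∀ k, ENNReal.ofReal c ^ k * volume (S 0) ≤ volume (S k) := by
    intro k
    induction k with
    | zero => simp
    | succ k ih =>
      calc ENNReal.ofReal c ^ (k + 1) * volume (S 0)
          = ENNReal.ofReal c * (ENNReal.ofReal c ^ k * volume (S 0)) := by ring
        _ ≤ ENNReal.ofReal c * volume (S k) := by gcongr
        _ ≤ volume (S (k + 1)) := hkey k
  set μ0 := volume (Metric.ball xs δ') with hμ0def
  have hμ0pos : 0 < μ0 := Metric.measure_ball_pos MeasureTheory.volume xs hδ'pos
  have hμ0fin : μ0 < ⊤ := measure_ball_lt_top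
  set M := volume (Metric.ball xs r) with hMdef
  have hMfin : M < ⊤ := measure_ball_lt_top
  have hub : ∀ k, volume (S k) ≤ M := fun k => measure_mono (hSsub k)
  -- find k with M < ofReal c ^ k * μ0
  have htend : Filter.Tendsto (fun k : ℕ => ENNReal.ofReal (c ^ k)) Filter.atTop (nhds ⊤) :=
    ENNReal.tendsto_ofReal_atTop.comp (tendsto_pow_atTop_atTop_of_one_lt hc1)
  have hlt : M / μ0 < ⊤ := ENNReal.div_lt_top hMfin.ne hμ0pos.ne'
  obtain ⟨k, hk⟩ := (htend.eventually (Filter.eventually_mem_set.2 (Ioi_mem_nhds hlt))).exists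
  have hk' : M < ENNReal.ofReal (c ^ k) * μ0 := by
    rw [← ENNReal.div_lt_iff (Or.inl hμ0pos.ne') (Or.inl hμ0fin.ne)]
    exact hk
  have : ENNReal.ofReal (c ^ k) * μ0 ≤ M := by
    rw [ENNReal.ofReal_pow (by linarith : (0:ℝ) ≤ c)]
    calc ENNReal.ofReal c ^ k * μ0 = ENNReal.ofReal c ^ k * volume (S 0) := by rw [hS0]
      _ ≤ volume (S k) := hiter k
      _ ≤ M := hub k
  exact absurd (lt_of_lt_of_le hk' this) (lt_irrefl M)
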